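/- On a board of isolated stacks of heights one and two where every group has two or four tiles and no blocked cycle is present, for every group that has a match (two playable tiles), at least one match of that group can be played such that the resulting board again contains no blocked cycle. -/

import Mathlib

/-- A board is a finite multiset of isolated stacks; each stack is a list of
tile groups, with the head of the list being the top tile of the stack. -/
abbrev Board (G : Type*) := Multiset (List G)

variable {G : Type*} [DecidableEq G]

/-- The number of tiles of group `g` remaining on the board. -/
def tileCount (B : Board G) (g : G) : ℕ := (B.map (fun s => s.count g)).sum

/-- The total number of tiles on the board. -/
def totalTiles (B : Board G) : ℕ := (B.map List.length).sum

/-- The board obtained by removing the (playable) top tiles of stacks `s₁` and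
`s₂`, the remaining stacks being `rest`; emptied stacks disappear. -/
def play (s₁ s₂ : List G) (rest : Board G) : Board G :=
  Multiset.filter (fun s => s ≠ []) (s₁.tail ::ₘ s₂.tail ::ₘ rest)

/-- A legal move: remove two playable (top) tiles of the same group. -/
def Move (B B' : Board G) : Prop :=
  ∃ (g : G) (s₁ s₂ : List G) (rest : Board G),
    B = s₁ ::ₘ s₂ ::ₘ rest ∧ s₁.head? = some g ∧ s₂.head? = some g ∧
    B' = play s₁ s₂ rest

/-- A board is solvable iff some sequence of legal moves empties it. -/
def Solvable (B : Board G) : Prop := Relation.ReflTransGen Move B 0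

/-- All stacks are nonempty and of height at most two. -/
def HeightsOK (B : Board G) : Prop := ∀ s ∈ B, s ≠ [] ∧ s.length ≤ 2

/-- A blocked cycle: distinct groups `p 0, …, p k`, each with exactly two
remaining tiles, such that for each `i` there is a height-two stack with a
`p (i+1)`-tile (cyclically) on top of a `p i`-tile. -/
def BlockedCycle (B : Board G) {k : ℕ} (p : Fin (k + 1) → G) : Prop :=
  Function.Injective p ∧ (∀ i, tileCount B (p i) = 2) ∧
    ∀ i, [p (i + 1), p i] ∈ B

/-- The board contains some blocked cycle. -/
def HasBlockedCycle (B : Board G) : Prop :=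
  ∃ (k : ℕ) (p : Fin (k + 1) → G), BlockedCycle B p

set_option linter.unusedSectionVars false
set_option linter.unusedVariables false
set_option maxHeartbeats 1000000

/-! ### Auxiliary lemmas -/


lemma tileCount_cons (s : List G) (M : Board G) (u : G) :
    tileCount (s ::ₘ M) u = s.count u + tileCount M u := by
  simp [tileCount]

lemma tileCount_mono {M N : Board G} (h : M ≤ N) (u : G) :
    tileCount M u ≤ tileCount N u := by
  obtain ⟨T, rfl⟩ := Multiset.le_iff_exists_add.mp h
  simp only [tileCount, Multiset.map_add, Multiset.sum_add]
  exact Nat.le_add_right _ _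

lemma tileCount_filter_ne (M : Board G) (u : G) :
    tileCount (Multiset.filter (fun s => s ≠ []) M) u = tileCount M u := by
  induction M using Multiset.induction with
  | empty => simp
  | cons s M ih =>
    rw [Multiset.filter_cons]
    by_cases hs : s = []
    · subst hs; simp [tileCount_cons, ih]
    · simp [hs, tileCount_cons, ih]

lemma tileCount_play (a b : List G) (r : Board G) (u : G) :
    tileCount (play a b r) u = a.tail.count u + b.tail.count u + tileCount r u := by
  rw [play, tileCount_filter_ne, tileCount_cons, tileCount_cons]
  omega

lemma head_cons {a : List G} {g : G} (h : a.head? = some g) : a = g :: a.tail := by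
  cases a <;> simp_all

lemma two_stack_mem {B : Board G} (hH : HeightsOK B) {a b : List G} {r : Board G}
    (hB : B = a ::ₘ b ::ₘ r) {u v : G} (h : [u, v] ∈ play a b r) : [u, v] ∈ r := by
  have hm := Multiset.mem_filter.mp h
  rcases Multiset.mem_cons.mp hm.1 with h1 | h2
  · have ha : a ∈ B := by simp [hB]
    have := (hH a ha).2
    have : a.tail.length ≤ 1 := by
      rw [List.length_tail]; omega
    rw [← h1] at this; simp at this
  · rcases Multiset.mem_cons.mp h2 with h3 | h4
    · have hb : b ∈ B := by simp [hB]
      have := (hH b hb).2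
      have : b.tail.length ≤ 1 := by
        rw [List.length_tail]; omega
      rw [← h3] at this; simp at this
    · exact h4

lemma cnt_pos {s : List G} {u : G} (h : u ∈ s) : 1 ≤ s.count u := List.count_pos_iff.mpr h

lemma three_count {M : Board G} {u : G} {l1 l2 l3 : List G}
    (h12 : l1 ≠ l2) (h13 : l1 ≠ l3) (h23 : l2 ≠ l3)
    (m1 : l1 ∈ M) (m2 : l2 ∈ M) (m3 : l3 ∈ M)
    (u1 : u ∈ l1) (u2 : u ∈ l2) (u3 : u ∈ l3) : 3 ≤ tileCount M u := by
  have hle : (l1 ::ₘ l2 ::ₘ l3 ::ₘ 0) ≤ M := by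
    rw [Multiset.le_iff_count]
    intro a
    simp only [Multiset.count_cons, Multiset.count_zero]
    by_cases e1 : a = l1 <;> by_cases e2 : a = l2 <;> by_cases e3 : a = l3 <;>
      simp_all <;>
      [exact Multiset.count_pos.mpr m1; exact Multiset.count_pos.mpr m2;
       exact Multiset.count_pos.mpr m3]
  calc 3 ≤ tileCount (l1 ::ₘ l2 ::ₘ l3 ::ₘ 0) u := by
        simp [tileCount_cons, tileCount]
        have := cnt_pos u1; have := cnt_pos u2; have := cnt_pos u3; omega
    _ ≤ tileCount M u := tileCount_mono hle u

lemma two_count {M : Board G} {u : G} {l1 l2 : List G}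
    (h12 : l1 ≠ l2) (m1 : l1 ∈ M) (m2 : l2 ∈ M)
    (u1 : u ∈ l1) (u2 : u ∈ l2) : l1.count u + l2.count u ≤ tileCount M u := by
  have hle : (l1 ::ₘ l2 ::ₘ 0) ≤ M := by
    rw [Multiset.le_iff_count]
    intro a
    simp only [Multiset.count_cons, Multiset.count_zero]
    by_cases e1 : a = l1 <;> by_cases e2 : a = l2 <;>
      simp_all <;>
      [exact Multiset.count_pos.mpr m1; exact Multiset.count_pos.mpr m2]
  calc l1.count u + l2.count u ≤ tileCount (l1 ::ₘ l2 ::ₘ 0) u := by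
        simp [tileCount_cons, tileCount]
    _ ≤ tileCount M u := tileCount_mono hle u

lemma rep_count {M : Board G} {u : G} {l1 l3 : List G}
    (h2 : 2 ≤ Multiset.count l1 M) (h13 : l1 ≠ l3) (m3 : l3 ∈ M)
    (u1 : u ∈ l1) (u3 : u ∈ l3) : 3 ≤ tileCount M u := by
  have hle : (l1 ::ₘ l1 ::ₘ l3 ::ₘ 0) ≤ M := by
    rw [Multiset.le_iff_count]
    intro a
    simp only [Multiset.count_cons, Multiset.count_zero]
    by_cases e1 : a = l1 <;> by_cases e3 : a = l3 <;>
      simp_all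
    exact Multiset.count_pos.mpr m3
  calc 3 ≤ tileCount (l1 ::ₘ l1 ::ₘ l3 ::ₘ 0) u := by
        simp [tileCount_cons, tileCount]
        have := cnt_pos u1; have := cnt_pos u3; omega
    _ ≤ tileCount M u := tileCount_mono hle u

lemma mem_tileCount_zero {M : Board G} {s : List G} {u : G}
    (hs : s ∈ M) (h : tileCount M u = 0) : u ∉ s := by
  intro hu
  have hle : ({s} : Board G) ≤ M := Multiset.singleton_le.mpr hs
  have := tileCount_mono hle u
  simp only [tileCount, Multiset.map_singleton, Multiset.sum_singleton] at this h
  have h1 := cnt_pos hu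
  omega

lemma lift {B : Board G} {g : G} (hH : HeightsOK B) {a b : List G} {r : Board G}
    (hB : B = a ::ₘ b ::ₘ r) (ha : a.head? = some g) (hb : b.head? = some g)
    {k : ℕ} {p : Fin (k + 1) → G} (hc : BlockedCycle (play a b r) p)
    (hgp : ∀ j, p j ≠ g) : HasBlockedCycle B := by
  obtain ⟨hinj, hcnt, hedge⟩ := hc
  refine ⟨k, p, hinj, ?_, ?_⟩
  · intro i
    have h2 := hcnt i
    rw [tileCount_play] at h2
    rw [hB, tileCount_cons, tileCount_cons]
    have ca : a.count (p i) = a.tail.count (p i) := by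
      conv_lhs => rw [head_cons ha]
      simp [List.count_cons, hgp i, (hgp i).symm]
    have cb : b.count (p i) = b.tail.count (p i) := by
      conv_lhs => rw [head_cons hb]
      simp [List.count_cons, hgp i, (hgp i).symm]
    omega
  · intro i
    have := two_stack_mem hH hB (hedge i)
    rw [hB]
    exact Multiset.mem_cons_of_mem (Multiset.mem_cons_of_mem this)

open Fin.NatCast in
lemma extract {B : Board G} {g : G} (hH : HeightsOK B) (hnc : ¬ HasBlockedCycle B)
    {a b : List G} {r : Board G}
    (hB : B = a ::ₘ b ::ₘ r) (ha : a.head? = some g) (hb : b.head? = some g)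
    (hgg : [g, g] ∉ B) (hbad : HasBlockedCycle (play a b r)) :
    tileCount B g = 4 ∧
    ∃ (m : ℕ) (q : ℕ → G),
      [q 0, g] ∈ r ∧ [g, q m] ∈ r ∧
      (∀ l, l < m → [q (l + 1), q l] ∈ B) ∧
      (∀ l, l ≤ m → q l ≠ g ∧ tileCount B (q l) = 2) ∧
      (∀ l l', l ≤ m → l' ≤ m → q l = q l' → l = l') := by
  obtain ⟨k, p, hinj, hcnt, hedge⟩ := hbad
  by_cases hg : ∃ i, p i = g
  case neg =>
    push_neg at hg
    exact absurd (lift hH hB ha hb ⟨hinj, hcnt, hedge⟩ hg) hnc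
  obtain ⟨i, hpi⟩ := hg
  have hcount4 : tileCount B g = 4 := by
    have h2 := hcnt i
    rw [hpi, tileCount_play] at h2
    rw [hB, tileCount_cons, tileCount_cons]
    have ca : a.count g = a.tail.count g + 1 := by
      conv_lhs => rw [head_cons ha]; simp [List.count_cons]
    have cb : b.count g = b.tail.count g + 1 := by
      conv_lhs => rw [head_cons hb]; simp [List.count_cons]
    omega
  rcases Nat.eq_zero_or_pos k with hk0 | hk
  · exfalso
    subst hk0
    have h01 : i + 1 = i := by
      apply Fin.ext
      have h1 := (i + 1).isLt
      have h2 := i.isLt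
      omega
    have he := hedge i
    rw [h01, hpi] at he
    have hm := two_stack_mem hH hB he
    apply hgg
    rw [hB]
    exact Multiset.mem_cons_of_mem (Multiset.mem_cons_of_mem hm)
  · set j : ℕ → Fin (k + 1) := fun l => i + ((1 + l : ℕ) : Fin (k + 1)) with hj
    set q : ℕ → G := fun l => p (j l) with hq
    refine ⟨hcount4, k - 1, q, ?_, ?_, ?_, ?_, ?_⟩
    · -- [q 0, g] ∈ r
      have hj0 : j 0 = i + 1 := by simp [hj]
      have := hedge i
      rw [hpi] at this
      have hmem := two_stack_mem hH hB this
      have h00 : q 0 = p (i + 1) := by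
        show p (j 0) = p (i + 1)
        rw [hj0]
      rwa [h00]
    · -- [g, q (k-1)] ∈ r
      have hjm : j (k - 1) + 1 = i := by
        rw [hj]
        show i + ((1 + (k - 1) : ℕ) : Fin (k + 1)) + 1 = i
        rw [add_assoc, ← Nat.cast_one (R := Fin (k + 1)), ← Nat.cast_add]
        have : (1 + (k - 1) + 1 : ℕ) = k + 1 := by omega
        rw [this, Fin.natCast_self, add_zero]
      have := hedge (j (k - 1))
      rw [hjm, hpi] at this
      exact two_stack_mem hH hB this
    · -- edges
      intro l hl
      have hjsucc : j (l + 1) = j l + 1 := by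
        rw [hj]
        show i + ((1 + (l + 1) : ℕ) : Fin (k + 1)) = i + ((1 + l : ℕ) : Fin (k + 1)) + 1
        rw [add_assoc]
        congr 1
        have : (1 + (l + 1) : ℕ) = (1 + l) + 1 := by omega
        rw [this, Nat.cast_add, Nat.cast_one]
      have := hedge (j l)
      rw [← hjsucc] at this
      have := two_stack_mem hH hB this
      rw [hB]
      exact Multiset.mem_cons_of_mem (Multiset.mem_cons_of_mem this)
    · -- nodes
      intro l hl
      have hne : q l ≠ g := by
        intro hql
        rw [← hpi] at hql
        have heq := hinj hql
        rw [hj] at heq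
        have h0 : ((1 + l : ℕ) : Fin (k + 1)) = 0 := add_eq_left.mp heq
        have hval := congrArg Fin.val h0
        rw [Fin.val_natCast] at hval
        have hlt : 1 + l < k + 1 := by omega
        rw [Nat.mod_eq_of_lt hlt] at hval
        simp at hval
      refine ⟨hne, ?_⟩
      have h2 := hcnt (j l)
      have hql : p (j l) = q l := rfl
      rw [hql, tileCount_play] at h2
      rw [hB, tileCount_cons, tileCount_cons]
      have ca : a.count (q l) = a.tail.count (q l) := by
        conv_lhs => rw [head_cons ha]
        simp [List.count_cons, hne, hne.symm]
      have cb : b.count (q l) = b.tail.count (q l) := by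
        conv_lhs => rw [head_cons hb]
        simp [List.count_cons, hne, hne.symm]
      omega
    · -- injectivity
      intro l l' hl hl' heq
      have := hinj heq
      rw [hj] at this
      have h0 : ((1 + l : ℕ) : Fin (k + 1)) = ((1 + l' : ℕ) : Fin (k + 1)) :=
        add_left_cancel this
      have hval := congrArg Fin.val h0
      rw [Fin.val_natCast, Fin.val_natCast] at hval
      rw [Nat.mod_eq_of_lt (by omega), Nat.mod_eq_of_lt (by omega)] at hval
      omega

lemma merge_aux (B : Board G) (g : G) (m' : ℕ) (q' : ℕ → G)
    (edges' : ∀ l, l < m' → [q' (l + 1), q' l] ∈ B)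
    (nodes' : ∀ l, l ≤ m' → q' l ≠ g ∧ tileCount B (q' l) = 2)
    (inj' : ∀ l l', l ≤ m' → l' ≤ m' → q' l = q' l' → l = l')
    (hxg : [q' 0, g] ∈ B)
    (m : ℕ) (hm : m < m') (hgy : [g, q' m] ∈ B) : False := by
  have hune : q' m ≠ g := (nodes' m hm.le).1
  have hu2 : tileCount B (q' m) = 2 := (nodes' m hm.le).2
  have hL2 : [q' (m + 1), q' m] ∈ B := edges' m hm
  have hq1g : q' (m + 1) ≠ g := (nodes' (m + 1) hm).1
  have hq1u : q' (m + 1) ≠ q' m := by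
    intro h
    have := inj' (m + 1) m hm hm.le h
    omega
  rcases Nat.eq_zero_or_pos m with h0 | hpos
  · subst h0
    have h3 := three_count (M := B) (u := q' 0)
      (l1 := [g, q' 0]) (l2 := [q' 1, q' 0]) (l3 := [q' 0, g])
      (by simp only [ne_eq, List.cons.injEq, not_and]; intro h1; exact absurd h1.symm hq1g)
      (by simp only [ne_eq, List.cons.injEq, not_and]; intro h1; exact absurd h1.symm hune)
      (by simp only [ne_eq, List.cons.injEq, not_and]; intro h1; exact absurd h1 hq1u)
      hgy hL2 hxg (by simp) (by simp) (by simp)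
    omega
  · have hL3 : [q' m, q' (m - 1)] ∈ B := by
      have := edges' (m - 1) (by omega)
      rwa [show m - 1 + 1 = m by omega] at this
    have h3 := three_count (M := B) (u := q' m)
      (l1 := [g, q' m]) (l2 := [q' (m + 1), q' m]) (l3 := [q' m, q' (m - 1)])
      (by simp only [ne_eq, List.cons.injEq, not_and]; intro h1; exact absurd h1.symm hq1g)
      (by simp only [ne_eq, List.cons.injEq, not_and]; intro h1; exact absurd h1.symm hune)
      (by simp only [ne_eq, List.cons.injEq, not_and]; intro h1; exact absurd h1 hq1u)
      hgy hL2 hL3 (by simp) (by simp) (by simp)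
    omega

lemma merge (B : Board G) (g : G) (m m' : ℕ) (q q' : ℕ → G)
    (h0 : q 0 = q' 0)
    (hxg : [q 0, g] ∈ B)
    (hgy : [g, q m] ∈ B) (hgy' : [g, q' m'] ∈ B)
    (hyy : q m ≠ q' m')
    (edges : ∀ l, l < m → [q (l + 1), q l] ∈ B)
    (nodes : ∀ l, l ≤ m → q l ≠ g ∧ tileCount B (q l) = 2)
    (inj : ∀ l l', l ≤ m → l' ≤ m → q l = q l' → l = l')
    (edges' : ∀ l, l < m' → [q' (l + 1), q' l] ∈ B)
    (nodes' : ∀ l, l ≤ m' → q' l ≠ g ∧ tileCount B (q' l) = 2)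
    (inj' : ∀ l l', l ≤ m' → l' ≤ m' → q' l = q' l' → l = l') : False := by
  have key : ∀ l, l ≤ m → l ≤ m' → q l = q' l := by
    intro l
    induction l with
    | zero => intro _ _; exact h0
    | succ n ih =>
      intro hn hn'
      have he : q n = q' n := ih (by omega) (by omega)
      by_contra hne
      have hu2 : tileCount B (q n) = 2 := (nodes n (by omega)).2
      have hug : q n ≠ g := (nodes n (by omega)).1
      have hL1 : [q (n + 1), q n] ∈ B := edges n (by omega)
      have hL2 : [q' (n + 1), q n] ∈ B := by
        rw [he]; exact edges' n (by omega)
      have hqn1 : q (n + 1) ≠ q n := by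
        intro h
        have := inj (n + 1) n hn (by omega) h
        omega
      have hqn1' : q' (n + 1) ≠ q n := by
        rw [he]
        intro h
        have := inj' (n + 1) n hn' (by omega) h
        omega
      rcases Nat.eq_zero_or_pos n with hn0 | hpos
      · subst hn0
        have h3 := three_count (M := B) (u := q 0)
          (l1 := [q 1, q 0]) (l2 := [q' 1, q 0]) (l3 := [q 0, g])
          (by simp only [ne_eq, List.cons.injEq, not_and]; intro h1; exact absurd h1 hne)
          (by simp only [ne_eq, List.cons.injEq, not_and]; intro h1; exact fun h2 => absurd h2 hug)
          (by simp only [ne_eq, List.cons.injEq, not_and]; intro h1; exact fun h2 => absurd h2 hug)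
          hL1 hL2 hxg (by simp) (by simp) (by simp)
        omega
      · have hL3 : [q n, q (n - 1)] ∈ B := by
          have := edges (n - 1) (by omega)
          rwa [show n - 1 + 1 = n by omega] at this
        have h3 := three_count (M := B) (u := q n)
          (l1 := [q (n + 1), q n]) (l2 := [q' (n + 1), q n]) (l3 := [q n, q (n - 1)])
          (by simp only [ne_eq, List.cons.injEq, not_and]; intro h1; exact absurd h1 hne)
          (by simp only [ne_eq, List.cons.injEq, not_and]; intro h1; exact absurd h1 hqn1)
          (by simp only [ne_eq, List.cons.injEq, not_and]; intro h1; exact absurd h1 hqn1')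
          hL1 hL2 hL3 (by simp) (by simp) (by simp)
        omega
  rcases lt_trichotomy m m' with h | h | h
  · exact merge_aux B g m' q' edges' nodes' inj' (by rw [← h0]; exact hxg) m h
      (by rw [← key m le_rfl h.le]; exact hgy)
  · exact hyy (by rw [key m le_rfl (by omega), h])
  · exact merge_aux B g m q edges nodes inj hxg m' h
      (by rw [key m' h.le le_rfl]; exact hgy')

/-- on a cycle-free board (stacks of heights one and two, groups of
size two or four), every group having a match has a match whose play leaves the
board cycle-free. -/
theorem stmt3 (B : Board G) (hH : HeightsOK B)
    (hs : ∀ g : G, tileCount B g = 0 ∨ tileCount B g = 2 ∨ tileCount B g = 4)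
    (hnc : ¬ HasBlockedCycle B) (g : G)
    (hmatch : ∃ (s₁ s₂ : List G) (rest : Board G),
      B = s₁ ::ₘ s₂ ::ₘ rest ∧ s₁.head? = some g ∧ s₂.head? = some g) :
    ∃ (s₁ s₂ : List G) (rest : Board G),
      B = s₁ ::ₘ s₂ ::ₘ rest ∧ s₁.head? = some g ∧ s₂.head? = some g ∧
      ¬ HasBlockedCycle (play s₁ s₂ rest) := by
  obtain ⟨s₁, s₂, rest, hB, h1, h2⟩ := hmatch
  by_cases hgg : [g, g] ∈ B
  · -- there is a [g,g] stack: play its top together with any other g-head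
    have hswap3 : ∀ (x y z : List G) (M : Board G),
        x ::ₘ y ::ₘ z ::ₘ M = z ::ₘ x ::ₘ y ::ₘ M := by
      intro x y z M
      rw [Multiset.cons_swap y z, Multiset.cons_swap x z]
    obtain ⟨t, rest₀, hB', ht⟩ : ∃ (t : List G) (rest₀ : Board G),
        B = [g, g] ::ₘ t ::ₘ rest₀ ∧ t.head? = some g := by
      by_cases e1 : s₁ = [g, g]
      · exact ⟨s₂, rest, by rw [hB, e1], h2⟩
      · by_cases e2 : s₂ = [g, g]
        · exact ⟨s₁, rest, by rw [hB, e2, Multiset.cons_swap], h1⟩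
        · have hr : [g, g] ∈ rest := by
            have hm := hgg
            rw [hB] at hm
            rcases Multiset.mem_cons.mp hm with h | h
            · exact absurd h.symm e1
            · rcases Multiset.mem_cons.mp h with h' | h'
              · exact absurd h'.symm e2
              · exact h'
          obtain ⟨r', hr'⟩ := Multiset.exists_cons_of_mem hr
          refine ⟨s₁, s₂ ::ₘ r', ?_, h1⟩
          rw [hB, hr']
          exact hswap3 s₁ s₂ [g, g] r'
    refine ⟨[g, g], t, rest₀, hB', rfl, ht, ?_⟩
    rintro ⟨k, p, hinj, hcnt, hedge⟩
    have hgmem : [g] ∈ play [g, g] t rest₀ := by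
      rw [play, Multiset.mem_filter]
      constructor
      · exact Multiset.mem_cons_self _ _
      · simp
    by_cases hthru : ∃ i, p i = g
    · obtain ⟨i, hpi⟩ := hthru
      have hcnt2 : tileCount (play [g, g] t rest₀) g = 2 := by
        have := hcnt i
        rwa [hpi] at this
      rcases Nat.eq_zero_or_pos k with hk0 | hk
      · subst hk0
        have h01 : i + 1 = i := by
          apply Fin.ext
          have hx1 := (i + 1).isLt
          have hx2 := i.isLt
          omega
        have he := hedge i
        rw [h01, hpi] at he
        have h2c := two_count (M := play [g, g] t rest₀) (u := g)
          (l1 := [g]) (l2 := [g, g]) (by simp) hgmem he (by simp) (by simp)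
        simp [List.count_cons] at h2c
        omega
      · have hone : (1 : Fin (k + 1)) ≠ 0 := by
          intro h0
          have hval := congrArg Fin.val h0
          rw [Fin.val_one'] at hval
          rw [Nat.mod_eq_of_lt (by omega)] at hval
          simp at hval
        have hne1 : p (i + 1) ≠ g := by
          rw [← hpi]
          intro hh'
          exact hone (add_eq_left.mp (hinj hh'))
        have hne2 : p (i - 1) ≠ g := by
          rw [← hpi]
          intro hh'
          have heq := hinj hh'
          have : i = i + 1 := by
            conv_lhs => rw [← sub_add_cancel i 1, heq]
          exact hone (add_eq_left.mp this.symm)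
        have he1 := hedge i
        rw [hpi] at he1
        have he2 := hedge (i - 1)
        rw [sub_add_cancel, hpi] at he2
        have h3 := three_count (M := play [g, g] t rest₀) (u := g)
          (l1 := [g]) (l2 := [p (i + 1), g]) (l3 := [g, p (i - 1)])
          (by simp) (by simp)
          (by simp only [ne_eq, List.cons.injEq, not_and]; intro hx; exact absurd hx hne1)
          hgmem he1 he2 (by simp) (by simp) (by simp)
        omega
    · push_neg at hthru
      exact hnc (lift hH hB' rfl ht ⟨hinj, hcnt, hedge⟩ hthru)
  · -- no [g,g] stack
    by_cases bad1 : HasBlockedCycle (play s₁ s₂ rest)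
    case neg => exact ⟨s₁, s₂, rest, hB, h1, h2, bad1⟩
    obtain ⟨hc4, m, q, hx, hy, hedges, hnodes, hinjq⟩ := extract hH hnc hB h1 h2 hgg bad1
    have hqx : q 0 ≠ g := (hnodes 0 (Nat.zero_le m)).1
    have hqy : q m ≠ g := (hnodes m le_rfl).1
    obtain ⟨r₁, hr₁⟩ := Multiset.exists_cons_of_mem hy
    have hxr₁ : [q 0, g] ∈ r₁ := by
      rw [hr₁] at hx
      rcases Multiset.mem_cons.mp hx with h | h
      · exfalso
        simp only [List.cons.injEq] at h
        exact hqx h.1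
      · exact h
    obtain ⟨r₂, hr₂⟩ := Multiset.exists_cons_of_mem hxr₁
    have hB2 : B = s₁ ::ₘ [g, q m] ::ₘ (s₂ ::ₘ [q 0, g] ::ₘ r₂) := by
      rw [hB, hr₁, hr₂]
      exact congrArg (s₁ ::ₘ ·) (Multiset.cons_swap _ _ _)
    have hcgs₁ : 1 ≤ s₁.count g := by
      conv_rhs => rw [head_cons h1]
      simp
    have hcgs₂ : 1 ≤ s₂.count g := by
      conv_rhs => rw [head_cons h2]
      simp
    have hacc : tileCount r₂ g = 0 ∧ s₂.count g = 1 := by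
      have h4 := hc4
      rw [hB2, tileCount_cons, tileCount_cons, tileCount_cons, tileCount_cons] at h4
      have c1 : ([g, q m] : List G).count g = 1 := by
        simp [List.count_cons, hqy]
      have c2 : ([q 0, g] : List G).count g = 1 := by
        simp [List.count_cons, hqx]
      rw [c1, c2] at h4
      omega
    by_cases bad2 : HasBlockedCycle (play s₁ [g, q m] (s₂ ::ₘ [q 0, g] ::ₘ r₂))
    case neg => exact ⟨s₁, [g, q m], _, hB2, h1, rfl, bad2⟩
    exfalso
    obtain ⟨hc4', m', q', hx', hy', hedges', hnodes', hinjq'⟩ :=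
      extract hH hnc hB2 h1 rfl hgg bad2
    have hqx' : q' 0 ≠ g := (hnodes' 0 (Nat.zero_le m')).1
    have hqy' : q' m' ≠ g := (hnodes' m' le_rfl).1
    have hs₂ : s₂ = [g, q' m'] := by
      rcases Multiset.mem_cons.mp hy' with h | h
      · exact h.symm
      · rcases Multiset.mem_cons.mp h with h' | h'
        · exfalso
          simp only [List.cons.injEq] at h'
          exact hqx h'.1.symm
        · exact absurd (by simp : g ∈ ([g, q' m'] : List G))
            (mem_tileCount_zero h' hacc.1)
    have hx'eq : q' 0 = q 0 := by
      rcases Multiset.mem_cons.mp hx' with h | h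
      · exfalso
        rw [hs₂] at h
        simp only [List.cons.injEq] at h
        exact hqx' h.1
      · rcases Multiset.mem_cons.mp h with h' | h'
        · simp only [List.cons.injEq] at h'
          exact h'.1
        · exact absurd (by simp : g ∈ ([q' 0, g] : List G))
            (mem_tileCount_zero h' hacc.1)
    have hmemB : ∀ l ∈ rest, l ∈ B := by
      intro l hl
      rw [hB]
      exact Multiset.mem_cons_of_mem (Multiset.mem_cons_of_mem hl)
    have hxgB : [q 0, g] ∈ B := hmemB _ hx
    have hgyB : [g, q m] ∈ B := hmemB _ hy
    have hgy'B : [g, q' m'] ∈ B := by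
      rw [← hs₂, hB]
      exact Multiset.mem_cons_of_mem (Multiset.mem_cons_self _ _)
    by_cases hyy : q m = q' m'
    · -- two copies of [g, q m] in B: count contradiction
      have hs₂' : s₂ = [g, q m] := by rw [hs₂, hyy]
      have hcnt2 : 2 ≤ Multiset.count ([g, q m]) B := by
        have e1 : B = s₁ ::ₘ [g, q m] ::ₘ [g, q m] ::ₘ ([q 0, g] ::ₘ r₂) := by
          rw [hB2, hs₂']
        rw [e1]
        have step : 2 ≤ Multiset.count ([g, q m])
            ([g, q m] ::ₘ [g, q m] ::ₘ ([q 0, g] ::ₘ r₂)) := by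
          rw [Multiset.count_cons_self, Multiset.count_cons_self]
          omega
        calc 2 ≤ _ := step
          _ ≤ _ := Multiset.count_le_count_cons _ _ _
      have hu2 : tileCount B (q m) = 2 := (hnodes m le_rfl).2
      rcases Nat.eq_zero_or_pos m' with hm'0 | hm'pos
      · subst hm'0
        have hxy : q m = q 0 := by rw [hyy, hx'eq]
        have h3 := rep_count (M := B) (u := q m)
          (l1 := [g, q m]) (l3 := [q 0, g]) hcnt2
          (by simp only [ne_eq, List.cons.injEq, not_and]; intro hh1; exact absurd hh1.symm hqx)
          hxgB (by simp) (by simp [hxy])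
        omega
      · have hL3 : [q' m', q' (m' - 1)] ∈ B := by
          have := hedges' (m' - 1) (by omega)
          rwa [show m' - 1 + 1 = m' by omega] at this
        have h3 := rep_count (M := B) (u := q m)
          (l1 := [g, q m]) (l3 := [q' m', q' (m' - 1)]) hcnt2
          (by simp only [ne_eq, List.cons.injEq, not_and]; intro hh1; exact absurd hh1.symm hqy')
          hL3 (by simp) (by simp [hyy])
        omega
    · exact merge B g m m' q q' hx'eq.symm hxgB hgyB hgy'B hyy
        hedges hnodes hinjq hedges' hnodes' hinjq'
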